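/- Let Y₁, ..., Yₙ be random variables taking values in [0,1] (not necessarily independent) such that ∑_{i=1}^n Yᵢ ≤ 1 almost surely. Then for any δ > 0, the probability that ∑_{i=1}^n E[Yᵢ | Y₁,...,Y_{i-1}] ≥ (e/(e-1))·ln(e/δ) is at most δ. -/

import Mathlib

open MeasureTheory

theorem aux2 {Ω : Type*} [mΩ : MeasurableSpace Ω] (μ : Measure Ω) [IsProbabilityMeasure μ]
    (n : ℕ) (Y : Fin n → Ω → ℝ)
    (hmeas : ∀ i, Measurable (Y i))
    (hbound : ∀ i, ∀ᵐ ω ∂μ, Y i ω ∈ Set.Icc (0 : ℝ) 1)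
    (hsum : ∀ᵐ ω ∂μ, ∑ i, Y i ω ≤ 1)
    (δ : ℝ) (hδ : 0 < δ)
    (X : Fin n → Ω → ℝ)
    (hX : ∀ i, X i = μ[Y i | ⨆ j : {j : Fin n // j < i}, MeasurableSpace.comap (Y j) Real.measurableSpace]) :
    μ {ω | (Real.exp 1 / (Real.exp 1 - 1)) * Real.log (Real.exp 1 / δ) ≤ ∑ i, X i ω}
      ≤ ENNReal.ofReal δ := by
  classical
  have he1 : (1:ℝ) < Real.exp 1 := by
    have := Real.exp_one_gt_d9; linarith
  set a : ℝ := 1 - (Real.exp 1)⁻¹ with ha_def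
  have ha0 : 0 < a := by
    have : (Real.exp 1)⁻¹ < 1 := inv_lt_one_of_one_lt₀ he1
    simp only [ha_def]; linarith
  have ha1 : a < 1 := by
    have : 0 < (Real.exp 1)⁻¹ := by positivity
    simp only [ha_def]; linarith
  set M : ℕ → MeasurableSpace Ω := fun k =>
    ⨆ j : Fin n, ⨆ _ : (j:ℕ) < k, MeasurableSpace.comap (Y j) Real.measurableSpace with hM_def
  have hMle : ∀ k, M k ≤ mΩ := fun k =>
    iSup_le fun j => iSup_le fun _ => (hmeas j).comap_le
  have hMmono : Monotone M := fun k l hkl =>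
    iSup_mono fun j => iSup_le fun h => le_iSup_of_le (h.trans_le hkl) le_rfl
  have hXeq : ∀ i : Fin n, X i = μ[Y i | M (i:ℕ)] := by
    intro i
    rw [hX i]
    rw [iSup_subtype]
    rfl
  -- basic integrability helper
  have hbdd_int : ∀ (f : Ω → ℝ) (C : ℝ), AEStronglyMeasurable f μ →
      (∀ᵐ ω ∂μ, ‖f ω‖ ≤ C) → Integrable f μ := fun f C hfm hfb =>
    Integrable.mono' (integrable_const C) hfm hfb
  have hYint : ∀ i, Integrable (Y i) μ := by
    intro i
    refine hbdd_int _ 1 (hmeas i).aestronglyMeasurable ?_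
    filter_upwards [hbound i] with ω hω
    rw [Real.norm_eq_abs, abs_le]
    exact ⟨by linarith [hω.1], hω.2⟩
  have hX0 : ∀ i, 0 ≤ᵐ[μ] X i := by
    intro i
    rw [hXeq i]
    exact condExp_nonneg ((hbound i).mono fun ω hω => hω.1)
  have hX1 : ∀ i, X i ≤ᵐ[μ] fun _ => 1 := by
    intro i
    rw [hXeq i]
    have h := condExp_mono (μ := μ) (m := M (i:ℕ)) (hYint i) (integrable_const 1)
      ((hbound i).mono fun ω hω => hω.2)
    rwa [condExp_const (hMle (i:ℕ)) (1:ℝ)] at h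
  have hXsm : ∀ i : Fin n, StronglyMeasurable[M (i:ℕ)] (X i) := by
    intro i; rw [hXeq i]; exact stronglyMeasurable_condExp
  have hXmeas : ∀ i : Fin n, Measurable (X i) := fun i =>
    ((hXsm i).mono (hMle _)).measurable
  -- the supermartingale-like functions
  set g : Fin n → Ω → ℝ := fun i ω => a * X i ω - Y i ω with hg_def
  set G : ℕ → Ω → ℝ := fun k ω =>
    Real.exp (∑ i ∈ Finset.univ.filter (fun i : Fin n => k ≤ (i:ℕ)), g i ω) with hG_def
  have hGmeas : ∀ k, Measurable (G k) := by
    intro k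
    exact Real.measurable_exp.comp (Finset.measurable_sum _ fun i _ =>
      ((measurable_const.mul (hXmeas i)).sub (hmeas i)))
  have hGpos : ∀ k ω, 0 < G k ω := fun k ω => Real.exp_pos _
  have hae : ∀ᵐ ω ∂μ, ∀ i : Fin n, (0 ≤ Y i ω ∧ Y i ω ≤ 1) ∧ 0 ≤ X i ω ∧ X i ω ≤ 1 := by
    rw [MeasureTheory.ae_all_iff]
    intro i
    filter_upwards [hbound i, hX0 i, hX1 i] with ω h1 h2 h3
    exact ⟨⟨h1.1, h1.2⟩, h2, h3⟩
  have hGbd : ∀ k, ∀ᵐ ω ∂μ, ‖G k ω‖ ≤ Real.exp n := by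
    intro k
    filter_upwards [hae] with ω hω
    rw [Real.norm_eq_abs, abs_of_pos (hGpos k ω)]
    refine Real.exp_le_exp.2 ?_
    calc ∑ i ∈ Finset.univ.filter (fun i : Fin n => k ≤ (i:ℕ)), g i ω
        ≤ ∑ _i ∈ Finset.univ.filter (fun i : Fin n => k ≤ (i:ℕ)), (1:ℝ) := by
          refine Finset.sum_le_sum fun i _ => ?_
          have h1 := (hω i).1.1
          have h2 := (hω i).2.2
          simp only [hg_def]
          nlinarith
      _ ≤ (n:ℝ) := by
          rw [Finset.sum_const, nsmul_eq_mul, mul_one]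
          have hcard : (Finset.univ.filter (fun i : Fin n => k ≤ (i:ℕ))).card ≤ n :=
            (Finset.card_filter_le _ _).trans (Finset.card_fin n).le
          exact_mod_cast hcard
  have hGint : ∀ k, Integrable (G k) μ := fun k =>
    hbdd_int _ _ (hGmeas k).aestronglyMeasurable (hGbd k)
  -- backward induction
  have key : ∀ d k, k + d = n → μ[G k | M k] ≤ᵐ[μ] fun _ => 1 := by
    intro d
    induction d with
    | zero =>
      intro k hk
      have hGn : G k = fun _ => 1 := by
        funext ω
        simp only [hG_def]
        rw [Finset.filter_false_of_mem, Finset.sum_empty, Real.exp_zero]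
        intro i _
        have := i.isLt
        omega
      rw [hGn, condExp_const (hMle k) (1:ℝ) (μ := μ)]
    | succ d ih =>
      intro k hk
      have hkn : k < n := by omega
      have IH := ih (k+1) (by omega)
      set i₀ : Fin n := ⟨k, hkn⟩ with hi₀
      have hfilter : Finset.univ.filter (fun i : Fin n => k ≤ (i:ℕ)) =
          insert i₀ (Finset.univ.filter (fun i : Fin n => k+1 ≤ (i:ℕ))) := by
        ext i
        simp only [Finset.mem_filter, Finset.mem_insert, Finset.mem_univ, true_and]
        constructor
        · intro h
          rcases eq_or_lt_of_le h with h' | h'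
          · left; exact (Fin.ext h'.symm)
          · right; omega
        · rintro (rfl | h)
          · simp [hi₀]
          · omega
      have hnotmem : i₀ ∉ Finset.univ.filter (fun i : Fin n => k+1 ≤ (i:ℕ)) := by
        simp [hi₀]
      have hsplit : G k = (fun ω => Real.exp (g i₀ ω)) * G (k+1) := by
        funext ω
        simp only [hG_def, Pi.mul_apply]
        rw [hfilter, Finset.sum_insert hnotmem, Real.exp_add]
      have hYm : Measurable[M (k+1)] (Y i₀) := by
        rw [measurable_iff_comap_le]
        exact le_iSup_of_le i₀ (le_iSup_of_le (by simp [hi₀]) le_rfl)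
      have hXm1 : StronglyMeasurable[M (k+1)] (X i₀) :=
        (hXsm i₀).mono (hMmono (Nat.le_succ k))
      have hfm : StronglyMeasurable[M (k+1)] (fun ω => Real.exp (g i₀ ω)) :=
        (Real.measurable_exp.comp
          ((measurable_const.mul hXm1.measurable).sub hYm)).stronglyMeasurable
      have hexpint : Integrable (fun ω => Real.exp (g i₀ ω)) μ := by
        refine hbdd_int _ (Real.exp 1) ?_ ?_
        · exact (Real.measurable_exp.comp
            ((measurable_const.mul (hXmeas i₀)).sub (hmeas i₀))).aestronglyMeasurable
        · filter_upwards [hae] with ω hω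
          rw [Real.norm_eq_abs, abs_of_pos (Real.exp_pos _)]
          refine Real.exp_le_exp.2 ?_
          have h1 := (hω i₀).1.1
          have h2 := (hω i₀).2.2
          simp only [hg_def]
          nlinarith
      have h1 : μ[G k | M (k+1)] =ᵐ[μ]
          (fun ω => Real.exp (g i₀ ω)) * μ[G (k+1) | M (k+1)] := by
        rw [hsplit]
        exact condExp_mul_of_stronglyMeasurable_left hfm (hsplit ▸ hGint k) (hGint (k+1))
      have h2 : μ[G k | M (k+1)] ≤ᵐ[μ] fun ω => Real.exp (g i₀ ω) := by
        filter_upwards [h1, IH] with ω e1 e2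
        rw [e1, Pi.mul_apply]
        calc Real.exp (g i₀ ω) * (μ[G (k+1)|M (k+1)]) ω
            ≤ Real.exp (g i₀ ω) * 1 :=
              mul_le_mul_of_nonneg_left e2 (Real.exp_pos _).le
          _ = Real.exp (g i₀ ω) := mul_one _
      have h3 : μ[G k | M k] ≤ᵐ[μ] μ[fun ω => Real.exp (g i₀ ω) | M k] := by
        refine (condExp_condExp_of_le (μ := μ) (f := G k)
          (hMmono (Nat.le_succ k)) (hMle (k+1))).symm.trans_le ?_
        exact condExp_mono integrable_condExp hexpint h2
      have hsplit2 : (fun ω => Real.exp (g i₀ ω)) =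
          (fun ω => Real.exp (a * X i₀ ω)) * (fun ω => Real.exp (-Y i₀ ω)) := by
        funext ω
        simp only [Pi.mul_apply, hg_def]
        rw [← Real.exp_add]
        ring_nf
      have hXexpm : StronglyMeasurable[M k] (fun ω => Real.exp (a * X i₀ ω)) :=
        (Real.measurable_exp.comp
          (measurable_const.mul (hXsm i₀).measurable)).stronglyMeasurable
      have hnegYint : Integrable (fun ω => Real.exp (-Y i₀ ω)) μ := by
        refine hbdd_int _ 1 ((Real.measurable_exp.comp
          (hmeas i₀).neg).aestronglyMeasurable) ?_
        filter_upwards [hbound i₀] with ω hω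
        rw [Real.norm_eq_abs, abs_of_pos (Real.exp_pos _)]
        exact Real.exp_le_one_iff.mpr (by linarith [hω.1])
      have h4 : μ[fun ω => Real.exp (g i₀ ω) | M k] =ᵐ[μ]
          (fun ω => Real.exp (a * X i₀ ω)) * μ[fun ω => Real.exp (-Y i₀ ω) | M k] := by
        rw [hsplit2]
        exact condExp_mul_of_stronglyMeasurable_left hXexpm (hsplit2 ▸ hexpint) hnegYint
      have h5 : μ[fun ω => Real.exp (-Y i₀ ω) | M k] ≤ᵐ[μ] fun ω => 1 - a * X i₀ ω := by
        have hpt : (fun ω => Real.exp (-Y i₀ ω)) ≤ᵐ[μ] fun ω => 1 - a * Y i₀ ω := by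
          filter_upwards [hbound i₀] with ω hω
          have hc := convexOn_exp.2 (Set.mem_univ (0:ℝ)) (Set.mem_univ (-1:ℝ))
            (by linarith [hω.2] : (0:ℝ) ≤ 1 - Y i₀ ω) hω.1 (by ring)
          simp only [smul_eq_mul, mul_zero, zero_add, mul_neg, mul_one, Real.exp_zero] at hc
          rw [Real.exp_neg 1] at hc
          simp only [ha_def]
          nlinarith
        have hm1 : Integrable (fun ω => 1 - a * Y i₀ ω) μ :=
          (integrable_const 1).sub ((hYint i₀).const_mul a)
        refine (condExp_mono hnegYint hm1 hpt).trans ?_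
        have hs := condExp_sub (μ := μ) (m := M k) (f := fun _ => (1:ℝ))
          (g := fun ω => a * Y i₀ ω) (integrable_const 1) ((hYint i₀).const_mul a)
        have e2 : μ[fun ω => a * Y i₀ ω | M k] =ᵐ[μ] fun ω => a * X i₀ ω := by
          have hsm : μ[a • Y i₀ | M k] =ᵐ[μ] a • μ[Y i₀ | M k] :=
            condExp_smul (μ := μ) (m := M k) a (Y i₀)
          rw [hXeq i₀]
          exact hsm
        have hfe : (fun ω => 1 - a * Y i₀ ω) = (fun _ => (1:ℝ)) - (fun ω => a * Y i₀ ω) := rfl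
        have e1 : μ[fun ω => 1 - a * Y i₀ ω | M k] =ᵐ[μ] fun ω => 1 - a * X i₀ ω := by
          rw [hfe]
          refine hs.trans ?_
          filter_upwards [e2] with ω he
          simp only [Pi.sub_apply]
          rw [condExp_const (hMle k) (1:ℝ) (μ := μ), he]
        exact e1.le
      have h6 : μ[fun ω => Real.exp (g i₀ ω) | M k] ≤ᵐ[μ] fun _ => 1 := by
        filter_upwards [h4, h5] with ω e4 e5
        rw [e4, Pi.mul_apply]
        calc Real.exp (a * X i₀ ω) * (μ[fun ω => Real.exp (-Y i₀ ω)|M k]) ω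
            ≤ Real.exp (a * X i₀ ω) * (1 - a * X i₀ ω) :=
              mul_le_mul_of_nonneg_left e5 (Real.exp_pos _).le
          _ ≤ Real.exp (a * X i₀ ω) * Real.exp (-(a * X i₀ ω)) := by
              refine mul_le_mul_of_nonneg_left ?_ (Real.exp_pos _).le
              linarith [Real.add_one_le_exp (-(a * X i₀ ω))]
          _ = 1 := by rw [← Real.exp_add]; simp
      exact h3.trans h6
  have hint1 : ∫ ω, G 0 ω ∂μ ≤ 1 := by
    have h0 := key n 0 (by omega)
    rw [← integral_condExp (hMle 0) (μ := μ) (f := G 0)]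
    calc ∫ ω, (μ[G 0|M 0]) ω ∂μ ≤ ∫ _ω, (1:ℝ) ∂μ :=
          integral_mono_ae integrable_condExp (integrable_const 1) h0
      _ = 1 := by simp
  set T : ℝ := Real.exp 1 / (Real.exp 1 - 1) * Real.log (Real.exp 1 / δ) with hT
  by_cases hδ1 : 1 ≤ δ
  · refine le_trans prob_le_one ?_
    rw [← ENNReal.ofReal_one]
    exact ENNReal.ofReal_le_ofReal hδ1
  push_neg at hδ1
  have hene : Real.exp 1 ≠ 0 := (Real.exp_pos 1).ne'
  have hene1 : Real.exp 1 - 1 ≠ 0 := by linarith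
  have haT : a * T = Real.log (Real.exp 1 / δ) := by
    rw [hT, ha_def]
    field_simp
  have hGA : ∀ᵐ ω ∂μ, T ≤ ∑ i, X i ω → δ⁻¹ ≤ G 0 ω := by
    filter_upwards [hsum] with ω h1 hA
    have hfil : Finset.univ.filter (fun i : Fin n => 0 ≤ (i:ℕ)) = Finset.univ := by simp
    simp only [hG_def, hfil]
    have hsplitsum : ∑ i, g i ω = a * ∑ i, X i ω - ∑ i, Y i ω := by
      simp only [hg_def]
      rw [Finset.sum_sub_distrib, Finset.mul_sum]
    rw [hsplitsum]
    have h3 : Real.log (Real.exp 1 / δ) - 1 ≤ a * ∑ i, X i ω - ∑ i, Y i ω := by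
      have h4 := mul_le_mul_of_nonneg_left hA ha0.le
      rw [haT] at h4
      linarith
    have h5 : δ⁻¹ = Real.exp (Real.log (Real.exp 1 / δ) - 1) := by
      rw [Real.exp_sub, Real.exp_log (by positivity)]
      field_simp
    rw [h5]
    exact Real.exp_le_exp.2 h3
  have hAB : μ {ω | T ≤ ∑ i, X i ω} ≤ μ {ω | δ⁻¹ ≤ G 0 ω} := by
    refine measure_mono_ae ?_
    filter_upwards [hGA] with ω h hω
    exact h hω
  have hmark := mul_meas_ge_le_integral_of_nonneg (μ := μ)
    (Filter.Eventually.of_forall fun ω => (hGpos 0 ω).le) (hGint 0) δ⁻¹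
  have hinv : δ * δ⁻¹ = 1 := mul_inv_cancel₀ hδ.ne'
  have htoReal : (μ {ω | δ⁻¹ ≤ G 0 ω}).toReal ≤ δ := by
    rw [measureReal_def] at hmark
    nlinarith [ENNReal.toReal_nonneg (a := μ {ω | δ⁻¹ ≤ G 0 ω})]
  refine hAB.trans ?_
  rw [← ENNReal.ofReal_toReal (measure_ne_top μ {ω | δ⁻¹ ≤ G 0 ω})]
  exact ENNReal.ofReal_le_ofReal htoReal

theorem stmt_2 {Ω : Type*} [MeasurableSpace Ω] (μ : Measure Ω) [IsProbabilityMeasure μ]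
    (n : ℕ) (Y : Fin n → Ω → ℝ)
    (hmeas : ∀ i, Measurable (Y i))
    (hbound : ∀ i, ∀ᵐ ω ∂μ, Y i ω ∈ Set.Icc (0 : ℝ) 1)
    (hsum : ∀ᵐ ω ∂μ, ∑ i, Y i ω ≤ 1)
    (δ : ℝ) (hδ : 0 < δ) :
    μ {ω | (Real.exp 1 / (Real.exp 1 - 1)) * Real.log (Real.exp 1 / δ) ≤
        ∑ i, (μ[Y i | ⨆ j : {j : Fin n // j < i}, MeasurableSpace.comap (Y j) Real.measurableSpace]) ω}
      ≤ ENNReal.ofReal δ := by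
  exact aux2 μ n Y hmeas hbound hsum δ hδ
    (fun i => μ[Y i | ⨆ j : {j : Fin n // j < i}, MeasurableSpace.comap (Y j) Real.measurableSpace])
    (fun i => rfl)
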